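/- With the Gauss-polynomial of degree N substituted for the range kernel g_{σr}(t-τ) with t = f(i-j), τ = f(i), the numerator of the bilateral filter equals exp(-f(i)²/(2σr²)) · σr · Σ_{n=0}^{N} (1/n!) (f(i)/σr)^n · (F_{n+1} * g_{σs})(i), where F_n(i) = exp(-f(i)²/(2σr²)) (f(i)/σr)^n. -/

import Mathlib

theorem gauss_polynomial_numerator (Ω : Finset (ℤ × ℤ)) (g : ℤ × ℤ → ℝ)
    (f : ℤ × ℤ → ℝ) (σr : ℝ) (hσr : σr > 0) (N : ℕ) (i : ℤ × ℤ) :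
    (∑ j ∈ Ω, g j *
        (Real.exp (-(f i)^2 / (2 * σr^2)) * Real.exp (-(f (i - j))^2 / (2 * σr^2)) *
          ∑ n ∈ Finset.range (N + 1),
            (1 / (n.factorial : ℝ)) * (f i * f (i - j) / σr^2)^n) * f (i - j)) =
      Real.exp (-(f i)^2 / (2 * σr^2)) * σr *
        ∑ n ∈ Finset.range (N + 1),
          (1 / (n.factorial : ℝ)) * (f i / σr)^n *
            (∑ j ∈ Ω, g j *
              (Real.exp (-(f (i - j))^2 / (2 * σr^2)) * (f (i - j) / σr)^(n + 1))) := by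
  have hσ : σr ≠ 0 := ne_of_gt hσr
  simp only [Finset.mul_sum, Finset.sum_mul]
  rw [Finset.sum_comm]
  refine Finset.sum_congr rfl fun j _ => Finset.sum_congr rfl fun n _ => ?_
  field_simp
  ring_nf
  simp [hσ]
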